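/- Fix τ ∈ (0,1) and x ≤ 0. For ρ > 0, set c(ρ) := (√((1−τ)²/4 + 1/ρ²) + (1−τ)/2)^{−1}, R^{τ}_{ρ}(z) := ∫_{−ρτ}^{ρ(1−τ)} e^{−(2·Re z − ξ)²/2} / (∫_{−∞}^{0} e^{−(t−ξ)²/2} dt) dξ for Re z ≤ 0, and the rescaled 1-point function R̃^{τ}_{ρ}(z) := (c(ρ)/ρ)² · R^{τ}_{ρ}((c(ρ)/ρ)·z). Then for every z ∈ ℂ with Re z = x ≤ 0, lim_{ρ→∞} R̃^{τ}_{ρ}(z) = ∫_{0}^{1} ξ · e^{2xξ} dξ. -/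

import Mathlib

open Filter MeasureTheory Real

noncomputable section

/-- The ratio `c(ρ) = (√((1-τ)²/4 + 1/ρ²) + (1-τ)/2)⁻¹` of the hard-edge mean eigenvalue
spacing to the bulk spacing. -/
def cOf (τ ρ : ℝ) : ℝ := (Real.sqrt ((1 - τ)^2 / 4 + 1 / ρ^2) + (1 - τ) / 2)⁻¹

/-- The one-sided hard edge scaling limit
`R^τ_ρ(z) = ∫_{-ρτ}^{ρ(1-τ)} e^{-(2 Re z - ξ)²/2} / (∫_{-∞}^0 e^{-(t-ξ)²/2} dt) dξ`. -/
def Rlim1 (ρ τ : ℝ) (z : ℂ) : ℝ :=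
  ∫ ξ in (-(ρ*τ))..(ρ*(1-τ)),
    Real.exp (-(2 * z.re - ξ)^2 / 2) /
      ∫ t in Set.Iio (0:ℝ), Real.exp (-(t - ξ)^2 / 2)

/-- The rescaled 1-point function `R̃^τ_ρ(z) = (c(ρ)/ρ)² R^τ_ρ((c(ρ)/ρ) z)`. -/
def Rtilde (τ ρ : ℝ) (z : ℂ) : ℝ :=
  (cOf τ ρ / ρ)^2 * Rlim1 ρ τ (((cOf τ ρ / ρ : ℝ) : ℂ) * z)


open Set Topology

set_option maxHeartbeats 1000000

namespace HEaux

/-- Gaussian tail. -/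
def Eg (ξ : ℝ) : ℝ := ∫ s in Set.Ioi ξ, Real.exp (-s^2 / 2)

lemma intG : Integrable (fun s : ℝ => Real.exp (-s^2 / 2)) := by
  have h := integrable_exp_neg_mul_sq (by norm_num : (0:ℝ) < 1/2)
  have : (fun s : ℝ => Real.exp (-(1/2) * s^2)) = fun s : ℝ => Real.exp (-s^2 / 2) := by
    funext s; ring_nf
  rwa [this] at h

lemma Eg_pos (ξ : ℝ) : 0 < Eg ξ := by
  rw [Eg]
  apply (setIntegral_pos_iff_support_of_nonneg_ae ?_ intG.integrableOn).mpr
  · have : (Function.support fun s : ℝ => Real.exp (-s^2/2)) = Set.univ := by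
      ext s; simp [Function.support, (Real.exp_pos _).ne']
    rw [this, Set.univ_inter]
    simp [Real.volume_Ioi]
  · filter_upwards with s using (Real.exp_pos _).le

lemma Eg_anti : Antitone Eg := by
  intro a b hab
  exact setIntegral_mono_set intG.integrableOn
    (Filter.Eventually.of_forall fun s => (Real.exp_pos _).le)
    (HasSubset.Subset.eventuallyLE (Set.Ioi_subset_Ioi hab))

lemma Eg_eq (ξ : ℝ) : Eg ξ = Eg 0 - ∫ s in (0:ℝ)..ξ, Real.exp (-s^2 / 2) := by
  have h1 := intervalIntegral.integral_Iic_add_Ioi (b := ξ)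
    (intG.integrableOn (s := Set.Iic ξ)) (intG.integrableOn)
  have h2 := intervalIntegral.integral_Iic_add_Ioi (b := (0:ℝ))
    (intG.integrableOn (s := Set.Iic 0)) (intG.integrableOn)
  have h3 := intervalIntegral.integral_Iic_sub_Iic
    (intG.integrableOn (s := Set.Iic 0)) (intG.integrableOn (s := Set.Iic ξ))
  rw [Eg, Eg, ← h3]
  linarith [h1, h2]

lemma Eg_hasDeriv (ξ : ℝ) : HasDerivAt Eg (-(Real.exp (-ξ^2 / 2))) ξ := by
  have h : HasDerivAt (fun u => ∫ s in (0:ℝ)..u, Real.exp (-s^2 / 2))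
      (Real.exp (-ξ^2 / 2)) ξ := by
    apply intervalIntegral.integral_hasDerivAt_right
      intG.intervalIntegrable
      intG.aestronglyMeasurable.stronglyMeasurableAtFilter
      (Real.continuous_exp.comp (by continuity)).continuousAt
  have : Eg = fun u => Eg 0 - ∫ s in (0:ℝ)..u, Real.exp (-s^2 / 2) := by
    funext u; exact Eg_eq u
  rw [this]
  exact ((hasDerivAt_const ξ (Eg 0)).sub h).congr_deriv (zero_sub _)


lemma intsG : Integrable (fun s : ℝ => s * Real.exp (-s^2 / 2)) := by
  have h := integrable_mul_exp_neg_mul_sq (by norm_num : (0:ℝ) < 1/2)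
  have : (fun s : ℝ => s * Real.exp (-(1/2) * s^2)) = fun s : ℝ => s * Real.exp (-s^2 / 2) := by
    funext s; ring_nf
  rwa [this] at h

lemma exp_gauss_tendsto : Tendsto (fun s : ℝ => Real.exp (-s^2 / 2)) atTop (𝓝 0) := by
  have h2 : Tendsto (fun s : ℝ => s^2 / 2) atTop atTop :=
    (tendsto_pow_atTop two_ne_zero).atTop_div_const (by norm_num)
  have h3 : Tendsto (fun s : ℝ => -s^2 / 2) atTop atBot := by
    have := tendsto_neg_atTop_atBot.comp h2
    simpa [Function.comp_def, neg_div] using this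
  exact Real.tendsto_exp_atBot.comp h3

lemma hasDerivAt_gauss (x : ℝ) :
    HasDerivAt (fun s : ℝ => Real.exp (-s^2 / 2)) (Real.exp (-x^2/2) * (-x)) x := by
  have h1 : HasDerivAt (fun s : ℝ => -s^2 / 2) (-x) x := by
    have := ((hasDerivAt_pow 2 x).neg).div_const 2
    simpa using this.congr_deriv (by ring)
  exact h1.exp

lemma integral_s_exp (ξ : ℝ) :
    ∫ s in Set.Ioi ξ, s * Real.exp (-s^2 / 2) = Real.exp (-ξ^2 / 2) := by
  have h := MeasureTheory.integral_Ioi_of_hasDerivAt_of_tendsto'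
    (f := fun s : ℝ => -(Real.exp (-s^2 / 2)))
    (f' := fun s : ℝ => s * Real.exp (-s^2 / 2)) (a := ξ) (m := 0)
    (fun x _ => by exact ((hasDerivAt_gauss x).neg).congr_deriv (by show _ = x * Real.exp (-x^2/2); ring))
    intsG.integrableOn
    (by simpa using exp_gauss_tendsto.neg)
  simpa using h

lemma Eg_upper {ξ : ℝ} (hξ : 0 < ξ) : Eg ξ ≤ Real.exp (-ξ^2 / 2) / ξ := by
  have hmono : Eg ξ ≤ ∫ s in Set.Ioi ξ, s * Real.exp (-s^2 / 2) / ξ := by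
    rw [Eg]
    apply setIntegral_mono_on intG.integrableOn
      ((intsG.integrableOn).div_const ξ) measurableSet_Ioi
    intro s hs
    rw [Set.mem_Ioi] at hs
    rw [le_div_iff₀ hξ]
    have : 0 < s := lt_trans hξ hs
    nlinarith [Real.exp_pos (-s^2/2)]
  calc Eg ξ ≤ ∫ s in Set.Ioi ξ, s * Real.exp (-s^2 / 2) / ξ := hmono
    _ = (∫ s in Set.Ioi ξ, s * Real.exp (-s^2 / 2)) / ξ := by rw [integral_div]
    _ = Real.exp (-ξ^2 / 2) / ξ := by rw [integral_s_exp]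

def psiG (ξ : ℝ) : ℝ := ξ / (ξ^2 + 1) * Real.exp (-ξ^2 / 2)

lemma hasDerivAt_psiG (x : ℝ) :
    HasDerivAt psiG (Real.exp (-x^2/2) * (2 - (x^2+1)^2) / (x^2+1)^2) x := by
  have hq : ((x:ℝ)^2 + 1) ≠ 0 := by positivity
  have hf : HasDerivAt (fun s : ℝ => s / (s^2 + 1))
      ((1 * (x^2+1) - x * (2*x)) / (x^2+1)^2) x := by
    have hd : HasDerivAt (fun s : ℝ => s^2 + 1) (2*x) x := by
      simpa using ((hasDerivAt_pow 2 x).add_const 1).congr_deriv (by ring)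
    exact (hasDerivAt_id x).div hd hq
  have := hf.mul (hasDerivAt_gauss x)
  apply this.congr_deriv
  field_simp
  ring

lemma phiG_nonneg (ξ : ℝ) : ξ / (ξ^2 + 1) * Real.exp (-ξ^2 / 2) ≤ Eg ξ := by
  set φ : ℝ → ℝ := fun s => Eg s - psiG s with hφ
  have hderiv : ∀ x : ℝ, HasDerivAt φ (-(Real.exp (-x^2/2) * 2 / (x^2+1)^2)) x := by
    intro x
    have := (Eg_hasDeriv x).sub (hasDerivAt_psiG x)
    apply this.congr_deriv
    have hq : ((x:ℝ)^2 + 1) ≠ 0 := by positivity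
    field_simp
    ring
  have hanti : Antitone φ := by
    apply antitone_of_deriv_nonpos
    · exact fun x => (hderiv x).differentiableAt
    · intro x
      rw [(hderiv x).deriv]
      have : (0:ℝ) < Real.exp (-x^2/2) * 2 / (x^2+1)^2 := by positivity
      linarith
  have hEg0 : Tendsto Eg atTop (𝓝 0) := by
    have hup : Tendsto (fun s : ℝ => Real.exp (-s^2/2) / s) atTop (𝓝 0) := by
      have h1 := exp_gauss_tendsto.mul tendsto_inv_atTop_zero
      simpa [div_eq_mul_inv] using h1
    refine tendsto_of_tendsto_of_tendsto_of_le_of_le' (g := fun _ : ℝ => (0:ℝ))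
      tendsto_const_nhds hup ?_ ?_
    · exact Filter.Eventually.of_forall fun s => (Eg_pos s).le
    · filter_upwards [Filter.eventually_gt_atTop (0:ℝ)] with s hs
      exact Eg_upper hs
  have hψ0 : Tendsto psiG atTop (𝓝 0) := by
    refine tendsto_of_tendsto_of_tendsto_of_le_of_le' (g := fun _ : ℝ => (0:ℝ))
      tendsto_const_nhds tendsto_inv_atTop_zero ?_ ?_
    · filter_upwards [Filter.eventually_gt_atTop (0:ℝ)] with s hs
      rw [psiG]
      positivity
    · filter_upwards [Filter.eventually_gt_atTop (0:ℝ)] with s hs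
      rw [psiG]
      have h1 : s / (s^2+1) ≤ s⁻¹ := by
        rw [div_le_iff₀ (by positivity), inv_mul_eq_div, le_div_iff₀ hs]
        nlinarith
      have h2 : Real.exp (-s^2/2) ≤ 1 := by
        rw [Real.exp_le_one_iff]
        nlinarith
      calc s / (s^2+1) * Real.exp (-s^2/2) ≤ s⁻¹ * 1 := by
            apply mul_le_mul h1 h2 (Real.exp_pos _).le (by positivity)
        _ = s⁻¹ := mul_one _
  have hφ0 : Tendsto φ atTop (𝓝 0) := by simpa using hEg0.sub hψ0
  have h0 : (0:ℝ) ≤ φ ξ := by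
    apply le_of_tendsto hφ0
    filter_upwards [Filter.eventually_ge_atTop ξ] with y hy
    exact hanti hy
  have h1 : (0:ℝ) ≤ Eg ξ - psiG ξ := h0
  rw [psiG] at h1
  linarith

lemma mills : Tendsto (fun ξ : ℝ => ξ * Real.exp (ξ^2 / 2) * Eg ξ) atTop (𝓝 1) := by
  have hlow : Tendsto (fun ξ : ℝ => ξ^2 / (ξ^2 + 1)) atTop (𝓝 1) := by
    have h1 : Tendsto (fun ξ : ℝ => 1 - 1/(ξ^2+1)) atTop (𝓝 1) := by
      have h2 : Tendsto (fun ξ : ℝ => ξ^2 + 1) atTop atTop :=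
        tendsto_atTop_add_const_right _ 1 (tendsto_pow_atTop two_ne_zero)
      have h3 := h2.inv_tendsto_atTop
      have h4 := (tendsto_const_nhds (α := ℝ) (x := (1:ℝ)) (f := atTop (α := ℝ))).sub h3
      simpa [one_div] using h4
    apply h1.congr'
    filter_upwards [Filter.eventually_gt_atTop (0:ℝ)] with ξ hξ
    field_simp
    ring
  apply tendsto_of_tendsto_of_tendsto_of_le_of_le' hlow tendsto_const_nhds
  · filter_upwards [Filter.eventually_gt_atTop (0:ℝ)] with ξ hξ
    have h := phiG_nonneg ξ
    have hprod : Real.exp (ξ^2/2) * Real.exp (-ξ^2/2) = 1 := by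
      rw [← Real.exp_add]; ring_nf; exact Real.exp_zero
    have hE : ξ * Real.exp (ξ^2/2) * (ξ / (ξ^2 + 1) * Real.exp (-ξ^2 / 2))
        = ξ^2 / (ξ^2+1) := by
      calc ξ * Real.exp (ξ^2/2) * (ξ / (ξ^2 + 1) * Real.exp (-ξ^2 / 2))
          = ξ * ξ / (ξ^2+1) * (Real.exp (ξ^2/2) * Real.exp (-ξ^2/2)) := by ring
        _ = ξ^2 / (ξ^2+1) := by rw [hprod]; ring
    calc ξ^2 / (ξ^2+1)
        = ξ * Real.exp (ξ^2/2) * (ξ / (ξ^2 + 1) * Real.exp (-ξ^2 / 2)) := hE.symm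
      _ ≤ ξ * Real.exp (ξ^2/2) * Eg ξ := by
          apply mul_le_mul_of_nonneg_left h (by positivity)
  · filter_upwards [Filter.eventually_gt_atTop (0:ℝ)] with ξ hξ
    have h := Eg_upper hξ
    have hprod : Real.exp (ξ^2/2) * Real.exp (-ξ^2/2) = 1 := by
      rw [← Real.exp_add]; ring_nf; exact Real.exp_zero
    have hE : ξ * Real.exp (ξ^2/2) * (Real.exp (-ξ^2 / 2) / ξ) = 1 := by
      have h5 : ξ * Real.exp (ξ^2/2) * (Real.exp (-ξ^2 / 2) / ξ)
          = Real.exp (ξ^2/2) * Real.exp (-ξ^2/2) := by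
        field_simp
      rw [h5, hprod]
    calc ξ * Real.exp (ξ^2/2) * Eg ξ
        ≤ ξ * Real.exp (ξ^2/2) * (Real.exp (-ξ^2 / 2) / ξ) := by
          apply mul_le_mul_of_nonneg_left h (by positivity)
      _ = 1 := hE

lemma denom_eq (ξ : ℝ) :
    (∫ t in Set.Iio (0:ℝ), Real.exp (-(t - ξ)^2 / 2)) = Eg ξ := by
  have h1 : (∫ t in Set.Iio (0:ℝ), Real.exp (-(t - ξ)^2 / 2))
      = ∫ t in Set.Iic (0:ℝ), Real.exp (-(t - ξ)^2 / 2) :=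
    (MeasureTheory.integral_Iic_eq_integral_Iio).symm
  have h2 : (∫ t in Set.Iic (0:ℝ), Real.exp (-(t - ξ)^2 / 2))
      = ∫ y in Set.Ioi (0:ℝ), Real.exp (-(y + ξ)^2 / 2) := by
    have h : (∫ t in Set.Iic (0:ℝ), Real.exp (-(t - ξ)^2 / 2))
        = ∫ t in Set.Iic (0:ℝ), (fun y => Real.exp (-(y + ξ)^2 / 2)) (-t) := by
      apply setIntegral_congr_fun measurableSet_Iic
      intro t _
      simp only
      rw [show -(t - ξ)^2/2 = -(-t + ξ)^2/2 by ring]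
    rw [h]
    simpa using integral_comp_neg_Iic (0:ℝ) (fun y => Real.exp (-(y + ξ)^2 / 2))
  have h3 : (∫ y in Set.Ioi (0:ℝ), Real.exp (-(y + ξ)^2 / 2))
      = ∫ s in Set.Ioi ξ, Real.exp (-s^2 / 2) := by
    rw [← integral_indicator measurableSet_Ioi, ← integral_indicator measurableSet_Ioi]
    have h4 : (fun y : ℝ => Set.indicator (Set.Ioi (0:ℝ))
        (fun y => Real.exp (-(y + ξ)^2 / 2)) y)
        = fun y : ℝ => Set.indicator (Set.Ioi ξ) (fun s => Real.exp (-s^2 / 2)) (y + ξ) := by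
      funext y
      by_cases hy : y ∈ Set.Ioi (0:ℝ)
      · rw [Set.indicator_of_mem hy, Set.indicator_of_mem (by simpa using hy)]
      · rw [Set.indicator_of_notMem hy, Set.indicator_of_notMem (by simpa using hy)]
    rw [h4]
    exact integral_add_right_eq_self _ ξ
  rw [h1, h2, h3, Eg]

lemma sqrt_ge {τ : ℝ} (h : 0 < 1 - τ) (ρ : ℝ) :
    (1 - τ)/2 ≤ Real.sqrt ((1 - τ)^2 / 4 + 1/ρ^2) := by
  have h0 : (1 - τ)/2 = Real.sqrt (((1 - τ)/2)^2) := (Real.sqrt_sq (by positivity)).symm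
  rw [h0]
  apply Real.sqrt_le_sqrt
  have : (0:ℝ) ≤ 1/ρ^2 := by positivity
  nlinarith

lemma c_pos {τ : ℝ} (h : 0 < 1 - τ) (ρ : ℝ) : 0 < cOf τ ρ := by
  rw [cOf]
  apply inv_pos.mpr
  have := Real.sqrt_nonneg ((1 - τ)^2/4 + 1/ρ^2)
  linarith

lemma c_le {τ : ℝ} (h : 0 < 1 - τ) (ρ : ℝ) : cOf τ ρ ≤ (1 - τ)⁻¹ := by
  rw [cOf]
  apply inv_anti₀ h
  have := sqrt_ge h ρ
  linarith

lemma c_tendsto {τ : ℝ} (h : 0 < 1 - τ) :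
    Tendsto (fun ρ => cOf τ ρ) atTop (𝓝 (1 - τ)⁻¹) := by
  have h1 : Tendsto (fun ρ : ℝ => 1/ρ^2) atTop (𝓝 0) := by
    have := (tendsto_pow_atTop (two_ne_zero)).inv_tendsto_atTop (l := atTop (α := ℝ))
    simpa [one_div, Pi.inv_def] using this
  have h2 : Tendsto (fun ρ : ℝ => (1 - τ)^2/4 + 1/ρ^2) atTop (𝓝 ((1 - τ)^2/4)) := by
    simpa using (tendsto_const_nhds (x := (1 - τ)^2/4) (f := atTop (α := ℝ))).add h1
  have h3 : Tendsto (fun ρ : ℝ => Real.sqrt ((1 - τ)^2/4 + 1/ρ^2)) atTop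
      (𝓝 ((1 - τ)/2)) := by
    have hs : Real.sqrt ((1 - τ)^2/4) = (1 - τ)/2 := by
      rw [show (1 - τ)^2/4 = ((1 - τ)/2)^2 by ring]
      exact Real.sqrt_sq (by positivity)
    have := (Real.continuous_sqrt.tendsto _).comp h2
    rwa [hs] at this
  have h4 : Tendsto (fun ρ : ℝ => Real.sqrt ((1 - τ)^2/4 + 1/ρ^2) + (1 - τ)/2) atTop
      (𝓝 (1 - τ)) := by
    have := h3.add (tendsto_const_nhds (x := (1 - τ)/2) (f := atTop (α := ℝ)))
    simpa [add_halves] using this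
  have := h4.inv₀ (ne_of_gt h)
  exact this

lemma ratio_tendsto {τ : ℝ} (h : 0 < 1 - τ) :
    Tendsto (fun ρ => cOf τ ρ / ρ) atTop (𝓝 0) := by
  have := (c_tendsto h).mul tendsto_inv_atTop_zero
  simpa [div_eq_mul_inv] using this

lemma k_tendsto {τ : ℝ} (h : 0 < 1 - τ) :
    Tendsto (fun ρ => ρ / cOf τ ρ) atTop atTop := by
  apply tendsto_atTop_mono' atTop (f₁ := fun ρ : ℝ => ρ * ((1 - τ)/2))
  · filter_upwards [Filter.eventually_ge_atTop (0:ℝ)] with ρ hρ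
    have hinv : (cOf τ ρ)⁻¹ = Real.sqrt ((1 - τ)^2/4 + 1/ρ^2) + (1 - τ)/2 := by
      rw [cOf, inv_inv]
    rw [show ρ / cOf τ ρ = ρ * (cOf τ ρ)⁻¹ from div_eq_mul_inv ρ _, hinv]
    apply mul_le_mul_of_nonneg_left _ hρ
    have := sqrt_ge h ρ
    have := Real.sqrt_nonneg ((1 - τ)^2/4 + 1/ρ^2)
    linarith
  · exact Tendsto.atTop_mul_const (by linarith) tendsto_id

/-- integrand after change of variables -/
def gfun (w ξ : ℝ) : ℝ := Real.exp (-(2*w - ξ)^2 / 2) / Eg ξ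

/-- the rescaled integrand as a function on ℝ -/
def He (τ x ρ : ℝ) : ℝ → ℝ :=
  Set.indicator (Set.Ioc (-(τ * cOf τ ρ)) ((1 - τ) * cOf τ ρ))
    (fun u => cOf τ ρ / ρ * gfun (cOf τ ρ / ρ * x) (ρ / cOf τ ρ * u))

lemma Rtilde_eq {τ x : ℝ} (h : 0 < 1 - τ) (z : ℂ) (hz : z.re = x) {ρ : ℝ} (hρ : 0 < ρ) :
    Rtilde τ ρ z = ∫ u, He τ x ρ u := by
  have hc := c_pos h ρ
  set c := cOf τ ρ with hcdef
  have hk : ρ / c ≠ 0 := by positivity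
  have hre : (((c/ρ : ℝ) : ℂ) * z).re = c/ρ * x := by
    rw [Complex.mul_re]
    simp [hz]
  rw [Rtilde, Rlim1, hre]
  simp only [denom_eq]
  have h2 : (∫ ξ in (-(ρ*τ))..(ρ*(1-τ)), Real.exp (-(2 * (c/ρ*x) - ξ)^2 / 2) / Eg ξ)
      = (ρ/c) • ∫ u in (-(τ*c))..((1-τ)*c),
          Real.exp (-(2 * (c/ρ*x) - (ρ/c*u))^2 / 2) / Eg (ρ/c*u) := by
    rw [intervalIntegral.integral_comp_mul_left
      (fun ξ => Real.exp (-(2 * (c/ρ*x) - ξ)^2 / 2) / Eg ξ) hk]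
    rw [smul_smul, mul_inv_cancel₀ hk, one_smul]
    have e1 : ρ/c * -(τ*c) = -(ρ*τ) := by field_simp
    have e2 : ρ/c * ((1-τ)*c) = ρ*(1-τ) := by field_simp
    rw [e1, e2]
  rw [h2]
  have hle : -(τ*c) ≤ (1-τ)*c := by nlinarith
  rw [smul_eq_mul, intervalIntegral.integral_of_le hle]
  rw [← integral_indicator measurableSet_Ioc]
  have h3 : ∀ u : ℝ, He τ x ρ u
      = (c/ρ)^2 * (ρ/c) * Set.indicator (Set.Ioc (-(τ*c)) ((1-τ)*c))
          (fun u => Real.exp (-(2 * (c/ρ*x) - (ρ/c*u))^2 / 2) / Eg (ρ/c*u)) u := by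
    intro u
    rw [He, ← hcdef]
    by_cases hu : u ∈ Set.Ioc (-(τ*c)) ((1-τ)*c)
    · rw [Set.indicator_of_mem hu, Set.indicator_of_mem hu, gfun]
      have : (c/ρ)^2 * (ρ/c) = c/ρ := by field_simp
      rw [this]
    · rw [Set.indicator_of_notMem hu, Set.indicator_of_notMem hu, mul_zero]
  rw [show (∫ u, He τ x ρ u) = ∫ u, (c/ρ)^2 * (ρ/c) * Set.indicator
      (Set.Ioc (-(τ*c)) ((1-τ)*c))
      (fun u => Real.exp (-(2 * (c/ρ*x) - (ρ/c*u))^2 / 2) / Eg (ρ/c*u)) u from by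
    congr 1; funext u; exact h3 u]
  rw [integral_const_mul]
  ring

lemma alg {c u ξ a b d E : ℝ} (hξ : ξ ≠ 0) (ha : a ≠ 0) (hE : E ≠ 0) (hcu : c = u/ξ) :
    c * (a⁻¹ * (b*d)/E) = u*b*d/(ξ*a*E) := by
  subst hcu
  field_simp

lemma ae_ne (a : ℝ) : ∀ᵐ u : ℝ, u ≠ a := by
  rw [MeasureTheory.ae_iff]
  simp only [ne_eq, not_not, Set.setOf_eq_eq_singleton]
  exact Real.volume_singleton

theorem main (τ x : ℝ) (hτ : τ ∈ Set.Ioo (0:ℝ) 1) (hx : x ≤ 0) :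
    ∀ z : ℂ, z.re = x →
      Tendsto (fun ρ : ℝ => Rtilde τ ρ z) atTop
        (𝓝 (∫ ξ in (0:ℝ)..1, ξ * Real.exp (2 * x * ξ))) := by
  obtain ⟨hτ0, hτ1⟩ := hτ
  have h1τ : 0 < 1 - τ := by linarith
  intro z hz
  have htarget : (∫ ξ in (0:ℝ)..1, ξ * Real.exp (2 * x * ξ))
      = ∫ u, Set.indicator (Set.Ioc (0:ℝ) 1) (fun u => u * Real.exp (2*x*u)) u := by
    rw [intervalIntegral.integral_of_le zero_le_one, ← integral_indicator measurableSet_Ioc]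
  rw [htarget]
  have hEgdiff : Differentiable ℝ Eg := fun s => (Eg_hasDeriv s).differentiableAt
  have hEgcont : Continuous Eg := hEgdiff.continuous
  set C : ℝ := max ((1 - τ)⁻¹ * (1 / Eg 1)) 2 with hC
  have hC0 : (0:ℝ) ≤ C := le_trans (by norm_num) (le_max_right _ 2)
  have hmain : Tendsto (fun ρ : ℝ => ∫ u, He τ x ρ u) atTop
      (𝓝 (∫ u, Set.indicator (Set.Ioc (0:ℝ) 1) (fun u => u * Real.exp (2*x*u)) u)) := by
    apply tendsto_integral_filter_of_dominated_convergence
      (bound := Set.indicator (Set.Icc (-(τ/(1 - τ)) - 1) 1) (fun _ => C))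
    · -- measurability
      apply Filter.Eventually.of_forall
      intro ρ
      rw [He]
      apply AEStronglyMeasurable.indicator ?_ measurableSet_Ioc
      apply Continuous.aestronglyMeasurable
      apply continuous_const.mul
      simp only [gfun]
      apply Continuous.div
      · apply Real.continuous_exp.comp
        continuity
      · exact hEgcont.comp (continuous_const.mul continuous_id)
      · intro u; exact (Eg_pos _).ne'
    · -- bound
      filter_upwards [Filter.eventually_ge_atTop (1:ℝ)] with ρ hρ1
      have hρ : (0:ℝ) < ρ := lt_of_lt_of_le one_pos hρ1
      have hc := c_pos h1τ ρ
      apply Filter.Eventually.of_forall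
      intro u
      by_cases hu : u ∈ Set.Ioc (-(τ * cOf τ ρ)) ((1 - τ) * cOf τ ρ)
      · have hone : (1 - τ) * cOf τ ρ ≤ 1 := by
          calc (1 - τ) * cOf τ ρ ≤ (1 - τ) * (1 - τ)⁻¹ :=
                mul_le_mul_of_nonneg_left (c_le h1τ ρ) (le_of_lt h1τ)
            _ = 1 := mul_inv_cancel₀ (ne_of_gt h1τ)
        have hub : u ≤ 1 := le_trans hu.2 hone
        have hlb : -(τ/(1 - τ)) - 1 ≤ u := by
          have h5 : τ * cOf τ ρ ≤ τ * (1 - τ)⁻¹ :=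
            mul_le_mul_of_nonneg_left (c_le h1τ ρ) (le_of_lt hτ0)
          have h6 : -(τ * (1 - τ)⁻¹) ≤ u := le_trans (neg_le_neg h5) (le_of_lt hu.1)
          have h7 : τ/(1 - τ) = τ * (1 - τ)⁻¹ := div_eq_mul_inv τ _
          linarith
        rw [He, Set.indicator_of_mem hu,
          Set.indicator_of_mem (Set.mem_Icc.mpr ⟨hlb, hub⟩)]
        have hkpos : 0 < ρ / cOf τ ρ := div_pos hρ hc
        have hgnonneg : ∀ w ξ : ℝ, 0 ≤ gfun w ξ := fun w ξ =>
          div_nonneg (Real.exp_pos _).le (Eg_pos _).le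
        have hnonneg : 0 ≤ cOf τ ρ / ρ * gfun (cOf τ ρ/ρ*x) (ρ/cOf τ ρ*u) :=
          mul_nonneg (div_nonneg hc.le hρ.le) (hgnonneg _ _)
        rw [Real.norm_eq_abs, abs_of_nonneg hnonneg]
        have hcρ : cOf τ ρ / ρ ≤ (1 - τ)⁻¹ :=
          le_trans (div_le_self hc.le hρ1) (c_le h1τ ρ)
        rcases le_or_gt (ρ/cOf τ ρ*u) 1 with hξ1 | hξ1
        · have hE1 : Eg 1 ≤ Eg (ρ/cOf τ ρ*u) := Eg_anti hξ1
          have hgb : gfun (cOf τ ρ/ρ*x) (ρ/cOf τ ρ*u) ≤ 1 / Eg 1 := by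
            rw [gfun]
            apply div_le_div₀ (by norm_num) ?_ (Eg_pos 1) hE1
            rw [Real.exp_le_one_iff]
            have := sq_nonneg (2*(cOf τ ρ/ρ*x) - ρ/cOf τ ρ*u)
            linarith
          calc cOf τ ρ/ρ * gfun (cOf τ ρ/ρ*x) (ρ/cOf τ ρ*u)
              ≤ (1 - τ)⁻¹ * (1/Eg 1) :=
                mul_le_mul hcρ hgb (hgnonneg _ _) (by positivity)
            _ ≤ C := le_max_left _ _
        · have hξ0 : 0 < ρ/cOf τ ρ*u := lt_trans one_pos hξ1
          have hkpos2 : 0 < ρ / cOf τ ρ := div_pos hρ hc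
          have hu0 : 0 < u := by nlinarith [hξ0, hkpos2]
          have hw : cOf τ ρ/ρ * x ≤ 0 :=
            mul_nonpos_of_nonneg_of_nonpos (div_nonneg hc.le hρ.le) hx
          have hnum : Real.exp (-(2*(cOf τ ρ/ρ*x) - ρ/cOf τ ρ*u)^2/2)
              ≤ Real.exp (-(ρ/cOf τ ρ*u)^2/2) := by
            apply Real.exp_le_exp.mpr
            nlinarith [sq_nonneg (cOf τ ρ/ρ*x)]
          have hlow := phiG_nonneg (ρ/cOf τ ρ*u)
          have hψpos : 0 < (ρ/cOf τ ρ*u)/((ρ/cOf τ ρ*u)^2+1)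
              * Real.exp (-(ρ/cOf τ ρ*u)^2/2) :=
            mul_pos (div_pos hξ0 (by positivity)) (Real.exp_pos _)
          have hgb : gfun (cOf τ ρ/ρ*x) (ρ/cOf τ ρ*u)
              ≤ ((ρ/cOf τ ρ*u)^2+1)/(ρ/cOf τ ρ*u) := by
            rw [gfun]
            have h8 := div_le_div₀ (Real.exp_pos (-(ρ/cOf τ ρ*u)^2/2)).le hnum hψpos hlow
            apply h8.trans_eq
            rw [div_eq_div_iff hψpos.ne' hξ0.ne']
            field_simp
          have hgb2 : ((ρ/cOf τ ρ*u)^2+1)/(ρ/cOf τ ρ*u) ≤ 2*(ρ/cOf τ ρ*u) := by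
            rw [div_le_iff₀ hξ0]
            nlinarith
          calc cOf τ ρ/ρ * gfun (cOf τ ρ/ρ*x) (ρ/cOf τ ρ*u)
              ≤ cOf τ ρ/ρ * (2*(ρ/cOf τ ρ*u)) :=
                mul_le_mul_of_nonneg_left (hgb.trans hgb2) (div_nonneg hc.le hρ.le)
            _ = 2*u := by field_simp [hc.ne', hρ.ne']
            _ ≤ 2 := by linarith
            _ ≤ C := le_max_right _ _
      · rw [He, Set.indicator_of_notMem hu, norm_zero]
        exact Set.indicator_nonneg (fun _ _ => hC0) u
    · -- integrable bound
      apply MeasureTheory.IntegrableOn.integrable_indicator ?_ measurableSet_Icc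
      exact MeasureTheory.integrableOn_const measure_Icc_lt_top.ne
    · -- pointwise limit
      filter_upwards [ae_ne 0, ae_ne 1] with u hu0 hu1
      rcases lt_trichotomy u 0 with hneg | hzero | hpos
      · rw [Set.indicator_of_notMem (by
          simp only [Set.mem_Ioc, not_and]
          intro h'; linarith)]
        have hub : Tendsto (fun ρ : ℝ => cOf τ ρ/ρ * (1/Eg 0)) atTop (𝓝 0) := by
          simpa using (ratio_tendsto h1τ).mul_const (1/Eg 0)
        refine tendsto_of_tendsto_of_tendsto_of_le_of_le' (g := fun _ : ℝ => (0:ℝ))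
          tendsto_const_nhds hub ?_ ?_
        · filter_upwards [Filter.eventually_gt_atTop (0:ℝ)] with ρ hρ
          have hc := c_pos h1τ ρ
          rw [He]
          exact Set.indicator_nonneg (fun v _ =>
            mul_nonneg (div_nonneg hc.le hρ.le)
              (div_nonneg (Real.exp_pos _).le (Eg_pos _).le)) u
        · filter_upwards [Filter.eventually_gt_atTop (0:ℝ)] with ρ hρ
          have hc := c_pos h1τ ρ
          rw [He]
          by_cases hmem : u ∈ Set.Ioc (-(τ * cOf τ ρ)) ((1 - τ) * cOf τ ρ)
          · rw [Set.indicator_of_mem hmem]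
            have hξ : ρ/cOf τ ρ * u ≤ 0 :=
              mul_nonpos_of_nonneg_of_nonpos (div_nonneg hρ.le hc.le) hneg.le
            have hE0 : Eg 0 ≤ Eg (ρ/cOf τ ρ * u) := Eg_anti hξ
            apply mul_le_mul_of_nonneg_left ?_ (div_nonneg hc.le hρ.le)
            rw [gfun]
            apply div_le_div₀ (by norm_num) ?_ (Eg_pos 0) hE0
            rw [Real.exp_le_one_iff]
            have := sq_nonneg (2*(cOf τ ρ/ρ*x) - ρ/cOf τ ρ*u)
            linarith
          · rw [Set.indicator_of_notMem hmem]
            exact mul_nonneg (div_nonneg hc.le hρ.le)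
              (div_nonneg zero_le_one (Eg_pos 0).le)
      · exact absurd hzero hu0
      · rcases lt_trichotomy u 1 with hlt | heq | hgt
        · -- main case
          rw [Set.indicator_of_mem (Set.mem_Ioc.mpr ⟨hpos, hlt.le⟩)]
          have hev : (fun ρ : ℝ => He τ x ρ u) =ᶠ[atTop] fun ρ : ℝ =>
              u * Real.exp (2*x*u) * Real.exp (-(2*(cOf τ ρ/ρ*x)^2))
                / ((ρ/cOf τ ρ*u) * Real.exp ((ρ/cOf τ ρ*u)^2/2) * Eg (ρ/cOf τ ρ*u)) := by
            have hgt1 : ∀ᶠ ρ : ℝ in atTop, u < (1 - τ) * cOf τ ρ := by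
              have hlim : Tendsto (fun ρ : ℝ => (1 - τ) * cOf τ ρ) atTop
                  (𝓝 ((1 - τ)*(1 - τ)⁻¹)) := (c_tendsto h1τ).const_mul (1 - τ)
              rw [mul_inv_cancel₀ (ne_of_gt h1τ)] at hlim
              exact hlim.eventually (eventually_gt_nhds hlt)
            filter_upwards [hgt1, Filter.eventually_gt_atTop (0:ℝ)] with ρ hρu hρ
            have hc := c_pos h1τ ρ
            have hmem : u ∈ Set.Ioc (-(τ * cOf τ ρ)) ((1 - τ) * cOf τ ρ) :=
              ⟨by nlinarith, hρu.le⟩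
            rw [He, Set.indicator_of_mem hmem, gfun]
            have hk0 : 0 < ρ / cOf τ ρ := div_pos hρ hc
            have hξ0 : 0 < ρ/cOf τ ρ * u := mul_pos hk0 hpos
            have hwid : cOf τ ρ/ρ * x * (ρ/cOf τ ρ * u) = x * u := by
              field_simp
            have harg : -(2*(cOf τ ρ/ρ*x) - ρ/cOf τ ρ*u)^2/2
                = -((ρ/cOf τ ρ*u)^2/2) + (2*(x*u) + -(2*(cOf τ ρ/ρ*x)^2)) := by
              linear_combination 2*hwid
            rw [harg, Real.exp_add, Real.exp_add, Real.exp_neg]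
            rw [show (2:ℝ)*(x*u) = 2*x*u by ring]
            have hcu : cOf τ ρ/ρ = u/(ρ/cOf τ ρ*u) := by
              rw [eq_div_iff hξ0.ne']
              field_simp
            exact alg hξ0.ne' (Real.exp_ne_zero _) (Eg_pos _).ne' hcu
          have hden : Tendsto (fun ρ : ℝ =>
              (ρ/cOf τ ρ*u) * Real.exp ((ρ/cOf τ ρ*u)^2/2) * Eg (ρ/cOf τ ρ*u))
              atTop (𝓝 1) := by
            have hk := Tendsto.atTop_mul_const hpos (k_tendsto h1τ)
            have := mills.comp hk
            simpa [Function.comp_def] using this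
          have hw0 : Tendsto (fun ρ : ℝ => cOf τ ρ/ρ * x) atTop (𝓝 0) := by
            simpa using (ratio_tendsto h1τ).mul_const x
          have h2 : Tendsto (fun ρ : ℝ => Real.exp (-(2*(cOf τ ρ/ρ*x)^2))) atTop
              (𝓝 1) := by
            have h3 := (hw0.mul hw0).const_mul (-2 : ℝ)
            have h4 : Tendsto (fun ρ : ℝ => -(2*(cOf τ ρ/ρ*x)^2)) atTop (𝓝 0) := by
              have he : (fun ρ : ℝ => -(2*(cOf τ ρ/ρ*x)^2))
                  = fun ρ : ℝ => -2 * ((cOf τ ρ/ρ*x) * (cOf τ ρ/ρ*x)) := by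
                funext ρ; ring
              rw [he]
              simpa using h3
            have := (Real.continuous_exp.tendsto 0).comp h4
            simpa [Real.exp_zero, Function.comp_def] using this
          have hnum : Tendsto (fun ρ : ℝ =>
              u * Real.exp (2*x*u) * Real.exp (-(2*(cOf τ ρ/ρ*x)^2))) atTop
              (𝓝 (u * Real.exp (2*x*u))) := by
            have := (tendsto_const_nhds
              (x := u * Real.exp (2*x*u)) (f := atTop (α := ℝ))).mul h2
            simpa using this
          have hdiv := hnum.div hden one_ne_zero
          rw [div_one] at hdiv
          exact Tendsto.congr' hev.symm hdiv
        · exact absurd heq hu1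
        · rw [Set.indicator_of_notMem (by
            simp only [Set.mem_Ioc, not_and]
            intro h'; linarith)]
          apply Tendsto.congr' (f₁ := fun _ : ℝ => (0:ℝ)) ?_ tendsto_const_nhds
          filter_upwards [Filter.eventually_gt_atTop (0:ℝ)] with ρ hρ
          have hc := c_pos h1τ ρ
          have hone : (1 - τ) * cOf τ ρ ≤ 1 := by
            calc (1 - τ) * cOf τ ρ ≤ (1 - τ) * (1 - τ)⁻¹ :=
                  mul_le_mul_of_nonneg_left (c_le h1τ ρ) (le_of_lt h1τ)
              _ = 1 := mul_inv_cancel₀ (ne_of_gt h1τ)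
          rw [He, Set.indicator_of_notMem (by
            simp only [Set.mem_Ioc, not_and]
            intro h'; linarith)]
  have hfinal : (fun ρ : ℝ => ∫ u, He τ x ρ u) =ᶠ[atTop] fun ρ => Rtilde τ ρ z := by
    filter_upwards [Filter.eventually_gt_atTop (0:ℝ)] with ρ hρ
    exact (Rtilde_eq h1τ z hz hρ).symm
  exact Tendsto.congr' hfinal hmain

end HEaux

/-- **Corollary (hard edge limit `ρ → ∞`, case `τ ∈ (0,1)`).** For fixed `τ ∈ (0,1)` and
`x ≤ 0`, for every `z ∈ ℂ` with `Re z = x` one has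
`lim_{ρ→∞} R̃^τ_ρ(z) = ∫_0^1 ξ e^{2xξ} dξ`. -/
theorem one_sided_hard_edge_large_rho_limit
    (τ x : ℝ) (hτ : τ ∈ Set.Ioo (0:ℝ) 1) (hx : x ≤ 0) :
    ∀ z : ℂ, z.re = x →
      Tendsto (fun ρ : ℝ => Rtilde τ ρ z) atTop
        (nhds (∫ ξ in (0:ℝ)..1, ξ * Real.exp (2 * x * ξ))) :=
  HEaux.main τ x hτ hx
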